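/- Let Ω be a locally compact, non-compact Hausdorff space such that C₀(Ω) is separable, let α be an aperiodic homeomorphism of Ω, and let w be a continuous positive function on Ω such that w and w⁻¹ = 1/w are bounded, so that T̃_{α,w}(f) = w·(f∘α) is an invertible bounded linear operator on C₀(Ω). Then T̃_{α,w} is supercyclic on C₀(Ω) if and only if for every compact subset K of Ω there exists a strictly increasing sequence (n_k) of natural numbers such that lim_{k→∞} [ ( sup_{t∈K} ∏_{j=0}^{n_k−1} w(α^{j−n_k}(t)) ) · ( sup_{t∈K} ∏_{j=0}^{n_k−1} (w(α^j(t)))⁻¹ ) ] = 0. -/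

import Mathlib

open scoped ZeroAtInfty
open Filter Finset

/-- A bounded linear operator `T` on a complex normed space is *supercyclic* if the
set of its supercyclic vectors, i.e. vectors `f` such that
`{ λ • T^n f : n ∈ ℕ, λ ∈ ℂ \ {0} }` is dense, is itself dense. -/
def IsSupercyclic {E : Type*} [NormedAddCommGroup E] [NormedSpace ℂ E]
    (T : E →L[ℂ] E) : Prop :=
  Dense {f : E | Dense {y : E | ∃ (n : ℕ) (lam : ℂ), 1 ≤ n ∧ lam ≠ 0 ∧
    y = lam • (T ^ n) f}}

set_option linter.unusedSectionVars false

section Aux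
variable {Ω : Type*} [TopologicalSpace Ω] [T2Space Ω]

lemma sc_symm_iter (α : Ω ≃ₜ Ω) {m n : ℕ} (h : m ≤ n) (t : Ω) :
    (⇑α.symm)^[m] ((⇑α)^[n] t) = (⇑α)^[n - m] t := by
  have h1 : (⇑α)^[n] t = (⇑α)^[m] ((⇑α)^[n - m] t) := by
    rw [← Function.iterate_add_apply]; congr 1; omega
  rw [h1]
  exact (Function.LeftInverse.iterate (fun a => α.symm_apply_apply a) m) _

lemma sc_iter_symm (α : Ω ≃ₜ Ω) {m n : ℕ} (h : m ≤ n) (t : Ω) :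
    (⇑α)^[m] ((⇑α.symm)^[n] t) = (⇑α.symm)^[n - m] t := by
  have h1 : (⇑α.symm)^[n] t = (⇑α.symm)^[m] ((⇑α.symm)^[n - m] t) := by
    rw [← Function.iterate_add_apply]; congr 1; omega
  rw [h1]
  exact (Function.LeftInverse.iterate (fun a => α.apply_symm_apply a) m) _

variable (α : Ω ≃ₜ Ω) (w : Ω → ℝ)
variable (T S : C₀(Ω, ℂ) →L[ℂ] C₀(Ω, ℂ))

lemma sc_T_pow (hT : ∀ (f : C₀(Ω, ℂ)) (t : Ω), T f t = (w t : ℂ) * f (α t)) :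
    ∀ (n : ℕ) (f : C₀(Ω, ℂ)) (t : Ω),
      ((T ^ n) f) t = (∏ j ∈ range n, (w ((⇑α)^[j] t) : ℂ)) * f ((⇑α)^[n] t) := by
  intro n
  induction n with
  | zero => intro f t; simp
  | succ n ih =>
    intro f t
    rw [pow_succ' T n]
    have h0 : ((T * T ^ n) f) = T ((T ^ n) f) := rfl
    rw [h0, hT, ih, prod_range_succ']
    simp only [← Function.iterate_succ_apply, Function.iterate_zero, id_eq]
    ring

lemma sc_S_apply (hw_pos : ∀ t, 0 < w t)
    (hT : ∀ (f : C₀(Ω, ℂ)) (t : Ω), T f t = (w t : ℂ) * f (α t))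
    (hTS : ∀ f, T (S f) = f) :
    ∀ (f : C₀(Ω, ℂ)) (t : Ω), S f t = ((w (α.symm t) : ℂ))⁻¹ * f (α.symm t) := by
  intro f t
  have h1 : f (α.symm t) = (w (α.symm t) : ℂ) * (S f) (α (α.symm t)) := by
    conv_lhs => rw [← hTS f]
    rw [hT]
  rw [α.apply_symm_apply] at h1
  have hne : (w (α.symm t) : ℂ) ≠ 0 := by
    exact_mod_cast (hw_pos (α.symm t)).ne'
  field_simp [h1]
  rw [h1]; ring

lemma sc_S_pow (hw_pos : ∀ t, 0 < w t)
    (hT : ∀ (f : C₀(Ω, ℂ)) (t : Ω), T f t = (w t : ℂ) * f (α t))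
    (hTS : ∀ f, T (S f) = f) :
    ∀ (n : ℕ) (f : C₀(Ω, ℂ)) (t : Ω),
      ((S ^ n) f) t = (∏ j ∈ range n, ((w ((⇑α.symm)^[j + 1] t) : ℂ))⁻¹) * f ((⇑α.symm)^[n] t) := by
  intro n
  induction n with
  | zero => intro f t; simp
  | succ n ih =>
    intro f t
    rw [pow_succ S n]
    have h0 : ((S ^ n * S) f) = (S ^ n) (S f) := rfl
    rw [h0, ih, sc_S_apply α w T S hw_pos hT hTS, prod_range_succ,
      ← Function.iterate_succ_apply' (⇑α.symm) n t]
    ring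

lemma sc_TS_pow (hTS : ∀ f, T (S f) = f) :
    ∀ (n : ℕ) (f : C₀(Ω, ℂ)), (T ^ n) ((S ^ n) f) = f := by
  intro n
  induction n with
  | zero => intro f; simp
  | succ n ih =>
    intro f
    rw [pow_succ T n, pow_succ' S n]
    have h0 : ((T ^ n * T) (((S * S ^ n)) f)) = (T ^ n) (T (S ((S ^ n) f))) := rfl
    rw [h0, hTS, ih]


lemma sc_norm_le (f : C₀(Ω, ℂ)) {C : ℝ} (hC : 0 ≤ C) (h : ∀ t, ‖f t‖ ≤ C) : ‖f‖ ≤ C := by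
  rw [← ZeroAtInftyContinuousMap.norm_toBCF_eq_norm]
  exact (BoundedContinuousFunction.norm_le hC).mpr h

lemma sc_apply_le_norm (f : C₀(Ω, ℂ)) (t : Ω) : ‖f t‖ ≤ ‖f‖ := by
  rw [← ZeroAtInftyContinuousMap.norm_toBCF_eq_norm]
  exact BoundedContinuousFunction.norm_coe_le_norm f.toBCF t

lemma sc_norm_T_pow (hw_cont : Continuous w) (hw_pos : ∀ t, 0 < w t)
    (hT : ∀ (f : C₀(Ω, ℂ)) (t : Ω), T f t = (w t : ℂ) * f (α t))
    (n : ℕ) (K : Set Ω) (hK : IsCompact K)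
    (f : C₀(Ω, ℂ)) (hf : ∀ t ∉ K, f t = 0) :
    ‖(T ^ n) f‖ ≤ sSup ((fun t => ∏ j ∈ range n, w ((⇑α.symm)^[n - j] t)) '' K) * ‖f‖ := by
  set g : Ω → ℝ := fun t => ∏ j ∈ range n, w ((⇑α.symm)^[n - j] t) with hg
  have hgc : Continuous g := by
    apply continuous_finset_prod
    intro j _
    exact hw_cont.comp (α.symm.continuous.iterate (n - j))
  have hbdd : BddAbove (g '' K) := (hK.image hgc).bddAbove
  have hA0 : 0 ≤ sSup (g '' K) := by
    apply Real.sSup_nonneg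
    rintro x ⟨t, _, rfl⟩
    exact le_of_lt (prod_pos fun j _ => hw_pos _)
  apply sc_norm_le
  · exact mul_nonneg hA0 (norm_nonneg f)
  intro t
  rw [sc_T_pow α w T hT n f t, norm_mul]
  have hnp : ‖∏ j ∈ range n, ((w ((⇑α)^[j] t) : ℂ))‖ = ∏ j ∈ range n, w ((⇑α)^[j] t) := by
    rw [norm_prod]
    exact prod_congr rfl fun j _ => by
      rw [Complex.norm_real, Real.norm_of_nonneg (hw_pos _).le]
  rw [hnp]
  by_cases hmem : (⇑α)^[n] t ∈ K
  · have hgeq : ∏ j ∈ range n, w ((⇑α)^[j] t) = g ((⇑α)^[n] t) := by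
      rw [hg]
      refine prod_congr rfl fun j hj => ?_
      have hj' : j < n := mem_range.mp hj
      rw [sc_symm_iter α (by omega : n - j ≤ n) t]
      congr 2
      omega
    rw [hgeq]
    exact mul_le_mul (le_csSup hbdd ⟨_, hmem, rfl⟩) (sc_apply_le_norm _ _)
      (norm_nonneg _) hA0
  · rw [hf _ hmem, norm_zero, mul_zero]
    exact mul_nonneg hA0 (norm_nonneg f)

lemma sc_norm_S_pow (hw_cont : Continuous w) (hw_pos : ∀ t, 0 < w t)
    (hT : ∀ (f : C₀(Ω, ℂ)) (t : Ω), T f t = (w t : ℂ) * f (α t))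
    (hTS : ∀ f, T (S f) = f)
    (n : ℕ) (K : Set Ω) (hK : IsCompact K)
    (f : C₀(Ω, ℂ)) (hf : ∀ t ∉ K, f t = 0) :
    ‖(S ^ n) f‖ ≤ sSup ((fun t => ∏ j ∈ range n, (w ((⇑α)^[j] t))⁻¹) '' K) * ‖f‖ := by
  set g : Ω → ℝ := fun t => ∏ j ∈ range n, (w ((⇑α)^[j] t))⁻¹ with hg
  have hgc : Continuous g := by
    apply continuous_finset_prod
    intro j _
    exact (hw_cont.comp (α.continuous.iterate j)).inv₀ fun x => (hw_pos _).ne'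
  have hbdd : BddAbove (g '' K) := (hK.image hgc).bddAbove
  have hB0 : 0 ≤ sSup (g '' K) := by
    apply Real.sSup_nonneg
    rintro x ⟨t, _, rfl⟩
    exact le_of_lt (prod_pos fun j _ => inv_pos.mpr (hw_pos _))
  apply sc_norm_le
  · exact mul_nonneg hB0 (norm_nonneg f)
  intro t
  rw [sc_S_pow α w T S hw_pos hT hTS n f t, norm_mul]
  have hnp : ‖∏ j ∈ range n, ((w ((⇑α.symm)^[j + 1] t) : ℂ))⁻¹‖
      = ∏ j ∈ range n, (w ((⇑α.symm)^[j + 1] t))⁻¹ := by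
    rw [norm_prod]
    exact prod_congr rfl fun j _ => by
      rw [norm_inv, Complex.norm_real, Real.norm_of_nonneg (hw_pos _).le]
  rw [hnp]
  by_cases hmem : (⇑α.symm)^[n] t ∈ K
  · have ht : t = (⇑α)^[n] ((⇑α.symm)^[n] t) := by
      rw [sc_iter_symm α le_rfl t]
      simp
    have hgeq : ∏ j ∈ range n, (w ((⇑α.symm)^[j + 1] t))⁻¹ = g ((⇑α.symm)^[n] t) := by
      show _ = ∏ j ∈ range n, (w ((⇑α)^[j] ((⇑α.symm)^[n] t)))⁻¹
      rw [← Finset.prod_range_reflect (fun j => (w ((⇑α)^[j] ((⇑α.symm)^[n] t)))⁻¹) n]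
      refine prod_congr rfl fun j hj => ?_
      have hj' : j < n := mem_range.mp hj
      congr 2
      conv_lhs => rw [ht]
      rw [sc_symm_iter α (by omega : j + 1 ≤ n) ((⇑α.symm)^[n] t)]
      congr 1
      omega
    rw [hgeq]
    exact mul_le_mul (le_csSup hbdd ⟨_, hmem, rfl⟩) (sc_apply_le_norm _ _)
      (norm_nonneg _) hB0
  · rw [hf _ hmem, norm_zero, mul_zero]
    exact mul_nonneg hB0 (norm_nonneg f)


lemma sc_mk_real (φ : C(Ω, ℝ)) (hφ : HasCompactSupport φ) :
    ∃ g : C₀(Ω, ℂ), ∀ t, g t = (φ t : ℂ) := by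
  have hz : Tendsto (fun t => (φ t : ℂ)) (cocompact Ω) (nhds 0) := by
    have hev : ∀ᶠ t in cocompact Ω, (φ t : ℂ) = 0 := by
      filter_upwards [Filter.mem_cocompact.mpr ⟨tsupport φ, hφ, subset_rfl⟩] with t ht
      rw [image_eq_zero_of_notMem_tsupport ht, Complex.ofReal_zero]
    exact Filter.Tendsto.congr' (Filter.EventuallyEq.symm hev) tendsto_const_nhds
  exact ⟨⟨⟨fun t => (φ t : ℂ), Complex.continuous_ofReal.comp φ.continuous⟩, hz⟩, fun t => rfl⟩

lemma sc_mk_mul (φ : C(Ω, ℝ)) (f : C₀(Ω, ℂ)) (hφ : ∀ t, |φ t| ≤ 1) :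
    ∃ g : C₀(Ω, ℂ), ∀ t, g t = (φ t : ℂ) * f t := by
  have hz : Tendsto (fun t => (φ t : ℂ) * f t) (cocompact Ω) (nhds 0) := by
    apply squeeze_zero_norm (a := fun t => ‖f t‖)
    · intro t
      rw [norm_mul, Complex.norm_real]
      calc ‖φ t‖ * ‖f t‖ ≤ 1 * ‖f t‖ :=
            mul_le_mul_of_nonneg_right (by simpa using hφ t) (norm_nonneg _)
        _ = ‖f t‖ := one_mul _
    · simpa using (zero_at_infty f).norm
  exact ⟨⟨⟨fun t => (φ t : ℂ) * f t,
    (Complex.continuous_ofReal.comp φ.continuous).mul (map_continuous f)⟩, hz⟩, fun t => rfl⟩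

lemma sc_approx_compact_support (f : C₀(Ω, ℂ)) {ε : ℝ} (hε : 0 < ε) [LocallyCompactSpace Ω] :
    ∃ (g : C₀(Ω, ℂ)) (K : Set Ω), IsCompact K ∧ (∀ t ∉ K, g t = 0) ∧ ‖f - g‖ ≤ ε := by
  obtain ⟨C, hC, hCf⟩ : ∃ C : Set Ω, IsCompact C ∧ ∀ t ∉ C, ‖f t‖ < ε := by
    have := Metric.tendsto_nhds.mp (zero_at_infty f) ε hε
    rw [Filter.hasBasis_cocompact.eventually_iff] at this
    obtain ⟨C, hC, h⟩ := this
    exact ⟨C, hC, fun t ht => by simpa [dist_eq_norm] using h ht⟩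
  obtain ⟨φ, hφ1, _, hφc, hφ01⟩ :=
    exists_continuous_one_zero_of_isCompact hC isClosed_empty (Set.disjoint_empty _)
  obtain ⟨g, hg⟩ := sc_mk_mul φ f (fun t => by
    have := hφ01 t; rw [abs_le]; constructor <;> [linarith [this.1]; exact this.2])
  refine ⟨g, tsupport φ, hφc, fun t ht => by rw [hg, image_eq_zero_of_notMem_tsupport ht]; simp, ?_⟩
  apply sc_norm_le _ hε.le
  intro t
  have hfg : (f - g) t = f t - g t := rfl
  rw [hfg, hg]
  by_cases htC : t ∈ C
  · rw [hφ1 htC]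
    simp [hε.le]
  · have h1 : ‖f t - (φ t : ℂ) * f t‖ = |1 - φ t| * ‖f t‖ := by
      rw [show f t - (φ t : ℂ) * f t = ((1 - φ t : ℝ) : ℂ) * f t by push_cast; ring,
        norm_mul, Complex.norm_real, Real.norm_eq_abs]
    rw [h1]
    have h2 : |1 - φ t| ≤ 1 := by
      have := hφ01 t
      rw [abs_le]; constructor <;> [linarith [this.2]; linarith [this.1]]
    calc |1 - φ t| * ‖f t‖ ≤ 1 * ε :=
          mul_le_mul h2 (hCf t htC).le (norm_nonneg _) one_pos.le
      _ = ε := one_mul _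


lemma sc_sSup_image_pos {g : Ω → ℝ} (hg : Continuous g) (hpos : ∀ t, 0 < g t)
    {K : Set Ω} (hK : IsCompact K) {t₀ : Ω} (ht₀ : t₀ ∈ K) : 0 < sSup (g '' K) :=
  lt_of_lt_of_le (hpos t₀) (le_csSup (hK.image hg).bddAbove ⟨t₀, ht₀, rfl⟩)

lemma sc_contA (hw_cont : Continuous w) (n : ℕ) :
    Continuous (fun t => ∏ j ∈ range n, w ((⇑α.symm)^[n - j] t)) := by
  apply continuous_finset_prod
  intro j _
  exact hw_cont.comp (α.symm.continuous.iterate (n - j))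

lemma sc_contB (hw_cont : Continuous w) (hw_pos : ∀ t, 0 < w t) (n : ℕ) :
    Continuous (fun t => ∏ j ∈ range n, (w ((⇑α)^[j] t))⁻¹) := by
  apply continuous_finset_prod
  intro j _
  exact (hw_cont.comp (α.continuous.iterate j)).inv₀ fun x => (hw_pos _).ne'

set_option maxHeartbeats 1000000 in
lemma sc_sufficiency [LocallyCompactSpace Ω] [NoncompactSpace Ω]
    [TopologicalSpace.SeparableSpace C₀(Ω, ℂ)]
    (hw_cont : Continuous w) (hw_pos : ∀ t, 0 < w t)
    (hT : ∀ (f : C₀(Ω, ℂ)) (t : Ω), T f t = (w t : ℂ) * f (α t))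
    (hTS : ∀ f, T (S f) = f)
    (hcond : ∀ K : Set Ω, IsCompact K →
      ∃ n : ℕ → ℕ, StrictMono n ∧ (∀ k, 1 ≤ n k) ∧
        Tendsto (fun k =>
            sSup ((fun t => ∏ j ∈ range (n k), w ((⇑α.symm)^[n k - j] t)) '' K) *
            sSup ((fun t => ∏ j ∈ range (n k), (w ((⇑α)^[j] t))⁻¹) '' K))
          atTop (nhds 0)) :
    Dense {f : C₀(Ω, ℂ) | Dense {y : C₀(Ω, ℂ) | ∃ (n : ℕ) (lam : ℂ), 1 ≤ n ∧ lam ≠ 0 ∧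
      y = lam • (T ^ n) f}} := by
  have hΩ : Nonempty Ω := by
    by_contra h
    rw [not_nonempty_iff] at h
    exact noncompact_univ Ω (by
      rw [Set.univ_eq_empty_iff.mpr h]; exact isCompact_empty)
  obtain ⟨t₀⟩ := hΩ
  haveI : Nonempty C₀(Ω, ℂ) := ⟨0⟩
  obtain ⟨y, hy⟩ := TopologicalSpace.exists_dense_seq C₀(Ω, ℂ)
  set O : ℕ × ℕ → Set C₀(Ω, ℂ) := fun p =>
    {f | ∃ (n : ℕ) (lam : ℂ), 1 ≤ n ∧ lam ≠ 0 ∧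
      ‖lam • (T ^ n) f - y p.1‖ < 1 / (p.2 + 1)} with hO
  have ho : ∀ p, IsOpen (O p) := by
    intro p
    have : O p = ⋃ (n : ℕ) (lam : ℂ) (_ : 1 ≤ n) (_ : lam ≠ 0),
        (fun f => lam • (T ^ n) f) ⁻¹' Metric.ball (y p.1) (1 / (p.2 + 1)) := by
      ext f
      simp only [hO, Set.mem_setOf_eq, Set.mem_iUnion, Set.mem_preimage, Metric.mem_ball,
        dist_eq_norm]
      tauto
    rw [this]
    refine isOpen_iUnion fun n => isOpen_iUnion fun lam => isOpen_iUnion fun _ =>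
      isOpen_iUnion fun _ => ?_
    exact Metric.isOpen_ball.preimage ((T ^ n).continuous.const_smul lam)
  have hd : ∀ p, Dense (O p) := by
    rintro ⟨m, k⟩
    rw [Metric.dense_iff]
    intro g ε hε
    have hc : (0:ℝ) < 1 / ((k:ℝ) + 1) := by positivity
    obtain ⟨g', Kg, hKg, hgsupp, hgg'⟩ := sc_approx_compact_support g (by positivity : (0:ℝ) < ε/4)
    obtain ⟨h', Kh, hKh, hhsupp, hyh'⟩ := sc_approx_compact_support (y m)
      (by positivity : (0:ℝ) < 1 / ((k:ℝ) + 1) / 4)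
    set K : Set Ω := Kg ∪ Kh ∪ {t₀} with hKdef
    have hK : IsCompact K := (hKg.union hKh).union isCompact_singleton
    have ht₀K : t₀ ∈ K := by simp [hKdef]
    obtain ⟨ns, hmono, hns1, htend⟩ := hcond K hK
    set D : ℝ := 1 + ‖g'‖ + ‖h'‖ with hD
    have hD1 : (1:ℝ) ≤ D := by rw [hD]; linarith [norm_nonneg g', norm_nonneg h']
    have hD0 : (0:ℝ) < D := by linarith
    set δ : ℝ := min (ε/4) (1 / ((k:ℝ) + 1) / 4) with hδdef
    have hδ : 0 < δ := lt_min (by positivity) (by positivity)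
    have hη : (0:ℝ) < (δ / D)^2 := by positivity
    obtain ⟨k₀, hk₀⟩ := (htend.eventually (gt_mem_nhds hη)).exists
    set n : ℕ := ns k₀ with hn
    set A : ℝ := sSup ((fun t => ∏ j ∈ range n, w ((⇑α.symm)^[n - j] t)) '' K) with hA
    set B : ℝ := sSup ((fun t => ∏ j ∈ range n, (w ((⇑α)^[j] t))⁻¹) '' K) with hB
    have hApos : 0 < A := sc_sSup_image_pos (sc_contA α w hw_cont n)
      (fun t => prod_pos fun j _ => hw_pos _) hK ht₀K
    have hBpos : 0 < B := sc_sSup_image_pos (sc_contB α w hw_cont hw_pos n)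
      (fun t => prod_pos fun j _ => inv_pos.mpr (hw_pos _)) hK ht₀K
    have hAB : A * B < (δ / D)^2 := hk₀
    have hsqrt : Real.sqrt (A * B) < δ / D := by
      rw [show (δ / D)^2 = (δ/D) * (δ/D) by ring] at hAB
      have := Real.sqrt_lt_sqrt (mul_nonneg hApos.le hBpos.le) hAB
      rwa [Real.sqrt_mul_self (by positivity)] at this
    set lam : ℂ := (Real.sqrt (B / A) : ℂ) with hlamdef
    have hlampos : 0 < Real.sqrt (B / A) := Real.sqrt_pos.mpr (by positivity)
    have hlam : lam ≠ 0 := by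
      simp only [hlamdef, ne_eq, Complex.ofReal_eq_zero]
      exact hlampos.ne'
    have hlamnorm : ‖lam‖ = Real.sqrt (B / A) := by
      rw [hlamdef, Complex.norm_real, Real.norm_of_nonneg hlampos.le]
    set f : C₀(Ω, ℂ) := g' + lam⁻¹ • (S ^ n) h' with hf
    -- bound on ‖lam⁻¹ • (S ^ n) h'‖
    have hSb : ‖(S ^ n) h'‖ ≤ B * ‖h'‖ :=
      sc_norm_S_pow α w T S hw_cont hw_pos hT hTS n K hK h'
        (fun t ht => hhsupp t (fun hmem => ht (by simp [hKdef, hmem])))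
    have hTb : ‖(T ^ n) g'‖ ≤ A * ‖g'‖ :=
      sc_norm_T_pow α w T hw_cont hw_pos hT n K hK g'
        (fun t ht => hgsupp t (fun hmem => ht (by simp [hKdef, hmem])))
    have hinvnorm : ‖lam⁻¹‖ = Real.sqrt (A / B) := by
      rw [norm_inv, hlamnorm, ← Real.sqrt_inv]
      congr 1
      field_simp
    have key1 : ‖lam⁻¹ • (S ^ n) h'‖ ≤ Real.sqrt (A * B) * ‖h'‖ := by
      rw [norm_smul lam⁻¹ ((S ^ n) h'), hinvnorm]
      calc Real.sqrt (A / B) * ‖(S ^ n) h'‖ ≤ Real.sqrt (A / B) * (B * ‖h'‖) :=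
            mul_le_mul_of_nonneg_left hSb (Real.sqrt_nonneg _)
        _ = (Real.sqrt (A / B) * B) * ‖h'‖ := by ring
        _ = Real.sqrt (A * B) * ‖h'‖ := by
            congr 1
            rw [← Real.sqrt_sq hBpos.le, ← Real.sqrt_mul (by positivity)]
            congr 1
            field_simp
            rw [Real.sq_sqrt (by positivity)]
    have key2 : ‖lam • (T ^ n) g'‖ ≤ Real.sqrt (A * B) * ‖g'‖ := by
      rw [norm_smul lam ((T ^ n) g'), hlamnorm]
      calc Real.sqrt (B / A) * ‖(T ^ n) g'‖ ≤ Real.sqrt (B / A) * (A * ‖g'‖) :=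
            mul_le_mul_of_nonneg_left hTb (Real.sqrt_nonneg _)
        _ = (Real.sqrt (B / A) * A) * ‖g'‖ := by ring
        _ = Real.sqrt (A * B) * ‖g'‖ := by
            congr 1
            rw [← Real.sqrt_sq hApos.le, ← Real.sqrt_mul (by positivity)]
            congr 1
            field_simp
            rw [Real.sq_sqrt (by positivity)]
    have hbound : Real.sqrt (A * B) * ‖h'‖ ≤ δ ∧ Real.sqrt (A * B) * ‖g'‖ ≤ δ := by
      constructor
      · calc Real.sqrt (A * B) * ‖h'‖ ≤ (δ / D) * D :=
              mul_le_mul hsqrt.le (by simp [hD]; linarith [norm_nonneg g']) (norm_nonneg _)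
                (by positivity)
          _ = δ := by field_simp
      · calc Real.sqrt (A * B) * ‖g'‖ ≤ (δ / D) * D :=
              mul_le_mul hsqrt.le (by simp [hD]; linarith [norm_nonneg h']) (norm_nonneg _)
                (by positivity)
          _ = δ := by field_simp
    refine ⟨f, ?_, ?_⟩
    · -- f ∈ ball g ε
      rw [Metric.mem_ball, dist_eq_norm, hf]
      have : g' + lam⁻¹ • (S ^ n) h' - g = (g' - g) + lam⁻¹ • (S ^ n) h' := by abel
      rw [this]
      calc ‖(g' - g) + lam⁻¹ • (S ^ n) h'‖ ≤ ‖g' - g‖ + ‖lam⁻¹ • (S ^ n) h'‖ := norm_add_le _ _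
        _ ≤ ε/4 + δ := by
            refine add_le_add ?_ (key1.trans hbound.1)
            rw [norm_sub_rev]; exact hgg'
        _ ≤ ε/4 + ε/4 := by linarith [min_le_left (ε/4) (1 / ((k:ℝ) + 1) / 4)]
        _ < ε := by linarith
    · -- f ∈ O (m, k)
      refine ⟨n, lam, hns1 k₀, hlam, ?_⟩
      have hTf : lam • (T ^ n) f = lam • (T ^ n) g' + h' := by
        have h1 : (T ^ n) f = (T ^ n) g' + lam⁻¹ • h' := by
          rw [hf, map_add, map_smul, sc_TS_pow T S hTS n h']
        rw [h1, smul_add lam ((T ^ n) g') (lam⁻¹ • h'), smul_inv_smul₀ hlam]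
      rw [hTf]
      have : lam • (T ^ n) g' + h' - y m = lam • (T ^ n) g' + (h' - y m) := by abel
      rw [this]
      calc ‖lam • (T ^ n) g' + (h' - y m)‖ ≤ ‖lam • (T ^ n) g'‖ + ‖h' - y m‖ := norm_add_le _ _
        _ ≤ δ + 1 / ((k:ℝ) + 1) / 4 := by
            refine add_le_add (key2.trans hbound.2) ?_
            rw [norm_sub_rev]; exact hyh'
        _ ≤ 1 / ((k:ℝ) + 1) / 4 + 1 / ((k:ℝ) + 1) / 4 := by
            linarith [min_le_right (ε/4) (1 / ((k:ℝ) + 1) / 4)]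
        _ < 1 / ((k:ℝ) + 1) := by
            have : (0:ℝ) < 1 / ((k:ℝ) + 1) := hc
            linarith
  haveI : BaireSpace C₀(Ω, ℂ) := inferInstance
  have hdense : Dense (⋂ p, O p) := dense_iInter_of_isOpen ho hd
  refine hdense.mono ?_
  intro f hf
  simp only [Set.mem_iInter] at hf
  rw [Set.mem_setOf_eq, Metric.dense_iff]
  intro z r hr
  obtain ⟨m, hm⟩ := (Metric.denseRange_iff.mp hy) z (r/2) (by positivity)
  obtain ⟨k, hk⟩ := exists_nat_one_div_lt (show (0:ℝ) < r/2 by positivity)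
  obtain ⟨n, lam, hn1, hlam, hball⟩ := hf (m, k)
  refine ⟨lam • (T ^ n) f, Metric.mem_ball.mpr ?_, ⟨n, lam, hn1, hlam, rfl⟩⟩
  calc dist (lam • (T ^ n) f) z ≤ dist (lam • (T ^ n) f) (y m) + dist (y m) z := dist_triangle _ _ _
    _ < 1 / ((k:ℝ) + 1) + r/2 := by
        rw [dist_eq_norm]
        exact add_lt_add_of_lt_of_le hball (le_of_lt (by rwa [dist_comm] at hm))
    _ < r/2 + r/2 := by
        have : (1:ℝ) / ((k:ℝ) + 1) < r/2 := by exact_mod_cast hk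
        linarith
    _ = r := by ring


lemma sc_two_indep [LocallyCompactSpace Ω] [NoncompactSpace Ω] :
    ∀ v : C₀(Ω, ℂ), ∃ g : C₀(Ω, ℂ), ∀ lam : ℂ, g ≠ lam • v := by
  have hinf : Infinite Ω := by
    rw [← not_finite_iff_infinite]
    intro h
    haveI : CompactSpace Ω := Finite.compactSpace
    exact noncompact_univ Ω isCompact_univ
  obtain ⟨t₁, t₂, hne⟩ := Nontrivial.exists_pair_ne (α := Ω)
  obtain ⟨φ₁, hφ₁1, hφ₁0, hφ₁c, _⟩ := exists_continuous_one_zero_of_isCompact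
    (isCompact_singleton : IsCompact {t₁}) (isClosed_singleton : IsClosed {t₂})
    (by simp [Set.disjoint_singleton, hne])
  obtain ⟨φ₂, hφ₂1, hφ₂0, hφ₂c, _⟩ := exists_continuous_one_zero_of_isCompact
    (isCompact_singleton : IsCompact {t₂}) (isClosed_singleton : IsClosed {t₁})
    (by simp [Set.disjoint_singleton, hne.symm])
  obtain ⟨f₁, hf₁⟩ := sc_mk_real φ₁ hφ₁c
  obtain ⟨f₂, hf₂⟩ := sc_mk_real φ₂ hφ₂c
  have hf₁1 : f₁ t₁ = 1 := by rw [hf₁]; exact_mod_cast congrArg Complex.ofReal (hφ₁1 rfl)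
  have hf₁2 : f₁ t₂ = 0 := by rw [hf₁]; exact_mod_cast congrArg Complex.ofReal (hφ₁0 rfl)
  have hf₂1 : f₂ t₁ = 0 := by rw [hf₂]; exact_mod_cast congrArg Complex.ofReal (hφ₂0 rfl)
  have hf₂2 : f₂ t₂ = 1 := by rw [hf₂]; exact_mod_cast congrArg Complex.ofReal (hφ₂1 rfl)
  intro v
  by_cases hv : v t₁ = 0
  · refine ⟨f₁, fun lam h => ?_⟩
    have := congrArg (fun u => u t₁) h
    rw [hf₁1] at this
    have h2 : (lam • v) t₁ = lam * v t₁ := rfl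
    rw [h2, hv, mul_zero] at this
    exact one_ne_zero this
  · refine ⟨f₂, fun lam h => ?_⟩
    have h1 := congrArg (fun u => u t₁) h
    have h2 : (lam • v) t₁ = lam * v t₁ := rfl
    rw [hf₂1, h2] at h1
    have hlam : lam = 0 := by
      rcases mul_eq_zero.mp h1.symm with h | h
      · exact h
      · exact absurd h hv
    have h3 := congrArg (fun u => u t₂) h
    have h4 : (lam • v) t₂ = lam * v t₂ := rfl
    rw [hf₂2, h4, hlam, zero_mul] at h3
    exact one_ne_zero h3

lemma sc_union_closed_empty_interior {E : Type*} [TopologicalSpace E]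
    (M : ℕ) (L : ℕ → Set E) (hcl : ∀ i, IsClosed (L i)) (hint : ∀ i, interior (L i) = ∅) :
    IsClosed (⋃ i ∈ Finset.range (M + 1), L i) ∧
      interior (⋃ i ∈ Finset.range (M + 1), L i) = ∅ := by
  induction M with
  | zero =>
    constructor
    · simpa using hcl 0
    · simpa using hint 0
  | succ M ih =>
    have hsplit : (⋃ i ∈ Finset.range (M + 1 + 1), L i)
        = (⋃ i ∈ Finset.range (M + 1), L i) ∪ L (M + 1) := by
      ext x
      simp only [Set.mem_iUnion, Set.mem_union, Finset.mem_range]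
      constructor
      · rintro ⟨i, hi, hx⟩
        rcases Nat.lt_succ_iff_lt_or_eq.mp hi with h | h
        · exact Or.inl ⟨i, h, hx⟩
        · subst h; exact Or.inr hx
      · rintro (⟨i, hi, hx⟩ | hx)
        · exact ⟨i, Nat.lt_succ_of_lt hi, hx⟩
        · exact ⟨M + 1, Nat.lt_succ_self _, hx⟩
    rw [hsplit]
    refine ⟨ih.1.union (hcl _), ?_⟩
    rw [Set.eq_empty_iff_forall_notMem]
    intro x hx
    have hop : IsOpen (interior ((⋃ i ∈ Finset.range (M + 1), L i) ∪ L (M + 1))) :=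
      isOpen_interior
    -- interior (A ∪ B) with A, B closed empty-interior is empty
    set V := interior ((⋃ i ∈ Finset.range (M + 1), L i) ∪ L (M + 1)) with hV
    have hVsub : V ⊆ (⋃ i ∈ Finset.range (M + 1), L i) ∪ L (M + 1) := interior_subset
    have h1 : V \ (⋃ i ∈ Finset.range (M + 1), L i) ⊆ L (M + 1) := by
      rintro z ⟨hz1, hz2⟩
      rcases hVsub hz1 with h | h
      · exact absurd h hz2
      · exact h
    have h2 : IsOpen (V \ (⋃ i ∈ Finset.range (M + 1), L i)) := hop.sdiff ih.1
    have h3 : V \ (⋃ i ∈ Finset.range (M + 1), L i) ⊆ interior (L (M + 1)) :=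
      h2.subset_interior_iff.mpr h1
    rw [hint (M + 1), Set.subset_empty_iff, Set.diff_eq_empty] at h3
    have h4 : V ⊆ interior (⋃ i ∈ Finset.range (M + 1), L i) :=
      (isOpen_interior (s := (⋃ i ∈ Finset.range (M + 1), L i) ∪ L (M+1))).subset_interior_iff.mpr h3
    rw [ih.2, Set.subset_empty_iff] at h4
    rw [hV] at h4
    exact Set.eq_empty_iff_forall_notMem.mp h4 x hx

lemma sc_avoid_lines {E : Type*} [NormedAddCommGroup E] [NormedSpace ℂ E]
    (hE : ∀ v : E, ∃ g : E, ∀ lam : ℂ, g ≠ lam • v)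
    (M : ℕ) (v : ℕ → E) (h : E) {ε : ℝ} (hε : 0 < ε) :
    ∃ h' : E, dist h' h < ε ∧ ∃ δ > 0, ∀ i ≤ M, ∀ lam : ℂ, δ ≤ dist h' (lam • v i) := by
  set L : ℕ → Set E := fun i => {x | ∃ lam : ℂ, x = lam • v i} with hL
  have hLspan : ∀ i, L i = ((ℂ ∙ v i : Submodule ℂ E) : Set E) := by
    intro i
    ext x
    simp only [hL, Set.mem_setOf_eq, SetLike.mem_coe, Submodule.mem_span_singleton]
    constructor
    · rintro ⟨lam, rfl⟩; exact ⟨lam, rfl⟩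
    · rintro ⟨lam, rfl⟩; exact ⟨lam, rfl⟩
  have hcl : ∀ i, IsClosed (L i) := fun i => by
    rw [hLspan i]
    exact Submodule.closed_of_finiteDimensional _
  have hint : ∀ i, interior (L i) = ∅ := by
    intro i
    by_contra hne
    have hnonempty : (interior (L i)).Nonempty := Set.nonempty_iff_ne_empty.mpr hne
    rw [hLspan i] at hnonempty
    have htop := Submodule.eq_top_of_nonempty_interior' _ hnonempty
    obtain ⟨g, hg⟩ := hE (v i)
    have : g ∈ (ℂ ∙ v i : Submodule ℂ E) := by rw [htop]; trivial
    rw [Submodule.mem_span_singleton] at this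
    obtain ⟨a, ha⟩ := this
    exact hg a ha.symm
  obtain ⟨hUcl, hUint⟩ := sc_union_closed_empty_interior M L hcl hint
  set U := ⋃ i ∈ Finset.range (M + 1), L i with hU
  have hball : ¬ Metric.ball h ε ⊆ U := by
    intro hsub
    have : Metric.ball h ε ⊆ interior U := Metric.isOpen_ball.subset_interior_iff.mpr hsub
    rw [hUint, Set.subset_empty_iff] at this
    exact Metric.nonempty_ball.mpr hε |>.ne_empty this
  obtain ⟨h', hh'ball, hh'U⟩ := Set.not_subset.mp hball
  obtain ⟨δ, hδ, hδball⟩ := Metric.isOpen_iff.mp hUcl.isOpen_compl h' hh'U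
  refine ⟨h', Metric.mem_ball.mp hh'ball, δ, hδ, ?_⟩
  intro i hi lam
  by_contra hlt
  push_neg at hlt
  have hmem : lam • v i ∈ Metric.ball h' δ := by
    rw [Metric.mem_ball, dist_comm]
    exact hlt
  have : lam • v i ∈ Uᶜ := hδball hmem
  apply this
  rw [hU]
  refine Set.mem_biUnion (Finset.mem_range.mpr (Nat.lt_succ_of_le hi)) ?_
  exact ⟨lam, rfl⟩


lemma sc_dist_apply (f g : C₀(Ω, ℂ)) (t : Ω) : ‖f t - g t‖ ≤ dist f g := by
  rw [dist_eq_norm]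
  exact sc_apply_le_norm (f - g) t

lemma sc_prod_norm (hw_pos : ∀ t, 0 < w t) (n : ℕ) (t : Ω) :
    ‖∏ j ∈ range n, ((w ((⇑α)^[j] t) : ℂ))‖ = ∏ j ∈ range n, w ((⇑α)^[j] t) := by
  rw [norm_prod]
  exact prod_congr rfl fun j _ => by
    rw [Complex.norm_real, Real.norm_of_nonneg (hw_pos _).le]

set_option maxHeartbeats 1000000 in
lemma sc_necessity [LocallyCompactSpace Ω] [NoncompactSpace Ω]
    (haper : ∀ K : Set Ω, IsCompact K →
      ∃ N : ℕ, 0 < N ∧ ∀ n ≥ N, ((⇑α)^[n] '' K) ∩ K = ∅)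
    (hw_cont : Continuous w) (hw_pos : ∀ t, 0 < w t)
    (hT : ∀ (f : C₀(Ω, ℂ)) (t : Ω), T f t = (w t : ℂ) * f (α t))
    (hsc : Dense {f : C₀(Ω, ℂ) | Dense {y : C₀(Ω, ℂ) | ∃ (n : ℕ) (lam : ℂ), 1 ≤ n ∧ lam ≠ 0 ∧
      y = lam • (T ^ n) f}})
    (K : Set Ω) (hK : IsCompact K) :
    ∃ n : ℕ → ℕ, StrictMono n ∧ (∀ k, 1 ≤ n k) ∧
      Tendsto (fun k =>
          sSup ((fun t => ∏ j ∈ range (n k), w ((⇑α.symm)^[n k - j] t)) '' K) *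
          sSup ((fun t => ∏ j ∈ range (n k), (w ((⇑α)^[j] t))⁻¹) '' K))
        atTop (nhds 0) := by
  rcases K.eq_empty_or_nonempty with rfl | ⟨t₀, ht₀⟩
  · refine ⟨fun k => k + 1, strictMono_nat_of_lt_succ (fun k => Nat.lt_succ_self (k+1)),
      fun k => Nat.succ_le_succ (Nat.zero_le k), ?_⟩
    simp only [Set.image_empty, Real.sSup_empty, mul_zero]
    exact tendsto_const_nhds
  -- setup
  obtain ⟨K', hK', hKU⟩ := exists_compact_superset hK
  obtain ⟨N, hN0, hNdis⟩ := haper K' hK'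
  obtain ⟨φ, hφ1, hφ0, hφc, hφ01⟩ := exists_continuous_one_zero_of_isCompact hK
    isOpen_interior.isClosed_compl (Set.disjoint_compl_right_iff_subset.mpr hKU)
  obtain ⟨h, hh⟩ := sc_mk_real φ hφc
  have hhK : ∀ t ∈ K, h t = 1 := fun t ht => by
    rw [hh t, hφ1 ht]; norm_num
  have hhU : ∀ t, t ∉ K' → h t = 0 := fun t ht => by
    rw [hh t, hφ0 (fun hc => ht (interior_subset hc))]; norm_num
  have hiterout : ∀ n, N ≤ n → ∀ t ∈ K, (⇑α)^[n] t ∉ K' ∧ (⇑α.symm)^[n] t ∉ K' := by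
    intro n hn t ht
    have hdis := hNdis n hn
    constructor
    · intro hc
      have : (⇑α)^[n] t ∈ ((⇑α)^[n] '' K') ∩ K' := ⟨⟨t, interior_subset (hKU ht), rfl⟩, hc⟩
      rw [hdis] at this; exact this
    · intro hc
      have h1 : (⇑α)^[n] ((⇑α.symm)^[n] t) = t := by
        have := sc_iter_symm α (le_rfl : n ≤ n) t
        simpa using this
      have : t ∈ ((⇑α)^[n] '' K') ∩ K' :=
        ⟨⟨(⇑α.symm)^[n] t, hc, h1⟩, interior_subset (hKU ht)⟩
      rw [hdis] at this; exact this
  -- the key claim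
  have hkey : ∀ (M : ℕ) (c : ℝ), 0 < c → ∃ n : ℕ, M < n ∧
      sSup ((fun t => ∏ j ∈ range n, w ((⇑α.symm)^[n - j] t)) '' K) *
      sSup ((fun t => ∏ j ∈ range n, (w ((⇑α)^[j] t))⁻¹) '' K) ≤ c := by
    intro M c hc
    set ε : ℝ := min (1/4) (Real.sqrt (c / 8)) with hεdef
    have hε : 0 < ε := lt_min (by norm_num) (Real.sqrt_pos.mpr (by positivity))
    have hε4 : ε ≤ 1/4 := min_le_left _ _
    have h8 : 8 * ε^2 ≤ c := by
      have h1 : ε^2 ≤ Real.sqrt (c/8) ^ 2 := by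
        apply pow_le_pow_left₀ hε.le (min_le_right _ _)
      rw [Real.sq_sqrt (by positivity : (0:ℝ) ≤ c/8)] at h1
      linarith
    obtain ⟨f, hfball, hfsc⟩ := Metric.dense_iff.mp hsc h ε hε
    rw [Metric.mem_ball] at hfball
    obtain ⟨h', hh'h, δ, hδ, hδfar⟩ :=
      sc_avoid_lines sc_two_indep (max M N) (fun i => (T ^ i) f) h hε
    have hr : (0:ℝ) < min ε δ := lt_min hε hδ
    obtain ⟨z, hzball, hzmem⟩ := Metric.dense_iff.mp hfsc h' (min ε δ) hr
    obtain ⟨n, lam, hn1, hlam, rfl⟩ := hzmem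
    rw [Metric.mem_ball] at hzball
    have hzε : dist (lam • (T ^ n) f) h' < ε := lt_of_lt_of_le hzball (min_le_left _ _)
    have hnbig : max M N < n := by
      by_contra hle
      push_neg at hle
      have := hδfar n hle lam
      rw [dist_comm] at this
      exact absurd (lt_of_lt_of_le hzball (min_le_right _ _)) (not_lt.mpr this)
    have hnN : N ≤ n := le_of_lt (lt_of_le_of_lt (le_max_right M N) hnbig)
    have hnM : M < n := lt_of_le_of_lt (le_max_left M N) hnbig
    set L : ℝ := ‖lam‖ with hL
    have hLpos : 0 < L := norm_pos_iff.mpr hlam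
    -- pointwise estimates
    have hcoreA : ∀ t ∈ K,
        (∏ j ∈ range n, w ((⇑α.symm)^[n - j] t)) ≤ 2*ε / ((1 - ε) * L) := by
      intro t ht
      have houter := hiterout n hnN t ht
      set s : Ω := (⇑α.symm)^[n] t with hs
      have hαns : (⇑α)^[n] s = t := by
        have := sc_iter_symm α (le_rfl : n ≤ n) t
        simpa [hs] using this
      have hzs : (lam • (T ^ n) f) s = lam * ((∏ j ∈ range n, ((w ((⇑α)^[j] s) : ℂ))) * f t) := by
        have h1 : (lam • (T ^ n) f) s = lam * ((T ^ n) f) s := rfl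
        rw [h1, sc_T_pow α w T hT n f s, hαns]
      have hprod_eq : (∏ j ∈ range n, w ((⇑α)^[j] s))
          = ∏ j ∈ range n, w ((⇑α.symm)^[n - j] t) := by
        refine prod_congr rfl fun j hj => ?_
        have hj' : j < n := mem_range.mp hj
        rw [hs, sc_iter_symm α (by omega : j ≤ n) t]
      -- norm bounds
      have hnz : ‖(lam • (T ^ n) f) s‖
          = L * ((∏ j ∈ range n, w ((⇑α)^[j] s)) * ‖f t‖) := by
        rw [hzs, norm_mul, norm_mul, sc_prod_norm α w hw_pos n s]
      have hft : 1 - ε ≤ ‖f t‖ := by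
        have h1 := sc_dist_apply f h t
        have h2 : ‖h t‖ = 1 := by rw [hhK t ht]; norm_num
        have h3 : ‖h t‖ - ‖f t - h t‖ ≤ ‖f t‖ := by
          have := norm_sub_norm_le (f t) (h t)
          have h4 := norm_sub_rev (f t) (h t)
          linarith [abs_norm_sub_norm_le (f t) (h t), abs_le.mp (abs_norm_sub_norm_le (f t) (h t))]
        linarith [lt_of_le_of_lt h1 hfball]
      have hzsmall : ‖(lam • (T ^ n) f) s‖ ≤ 2 * ε := by
        have h1 : ‖h' s‖ ≤ ε := by
          have h2 := sc_dist_apply h' h s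
          have h3 : h s = 0 := hhU s houter.2
          rw [h3, sub_zero] at h2
          linarith [lt_of_le_of_lt h2 hh'h]
        have h4 := sc_dist_apply (lam • (T ^ n) f) h' s
        calc ‖(lam • (T ^ n) f) s‖ ≤ ‖(lam • (T ^ n) f) s - h' s‖ + ‖h' s‖ := by
              simpa using norm_add_le ((lam • (T ^ n) f) s - h' s) (h' s)
          _ ≤ ε + ε := add_le_add (le_of_lt (lt_of_le_of_lt h4 hzε)) h1
          _ = 2 * ε := by ring
      have hProdpos : 0 < ∏ j ∈ range n, w ((⇑α)^[j] s) := prod_pos fun j _ => hw_pos _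
      have hstep : L * ((∏ j ∈ range n, w ((⇑α)^[j] s)) * (1 - ε)) ≤ 2 * ε := by
        calc L * ((∏ j ∈ range n, w ((⇑α)^[j] s)) * (1 - ε))
            ≤ L * ((∏ j ∈ range n, w ((⇑α)^[j] s)) * ‖f t‖) := by
              apply mul_le_mul_of_nonneg_left _ hLpos.le
              exact mul_le_mul_of_nonneg_left hft hProdpos.le
          _ = ‖(lam • (T ^ n) f) s‖ := hnz.symm
          _ ≤ 2 * ε := hzsmall
      rw [← hprod_eq]
      rw [le_div_iff₀ (mul_pos (by linarith : (0:ℝ) < 1 - ε) hLpos)]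
      calc (∏ j ∈ range n, w ((⇑α)^[j] s)) * ((1 - ε) * L)
          = L * ((∏ j ∈ range n, w ((⇑α)^[j] s)) * (1 - ε)) := by ring
        _ ≤ 2 * ε := hstep
    have hcoreB : ∀ t ∈ K,
        (∏ j ∈ range n, (w ((⇑α)^[j] t))⁻¹) ≤ L * ε / (1 - 2*ε) := by
      intro t ht
      have houter := hiterout n hnN t ht
      have hzt : ‖(lam • (T ^ n) f) t‖
          = L * ((∏ j ∈ range n, w ((⇑α)^[j] t)) * ‖f ((⇑α)^[n] t)‖) := by
        have h1 : (lam • (T ^ n) f) t = lam * ((T ^ n) f) t := rfl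
        rw [h1, sc_T_pow α w T hT n f t, norm_mul, norm_mul, sc_prod_norm α w hw_pos n t]
      have hfαt : ‖f ((⇑α)^[n] t)‖ ≤ ε := by
        have h1 := sc_dist_apply f h ((⇑α)^[n] t)
        have h2 : h ((⇑α)^[n] t) = 0 := hhU _ houter.1
        rw [h2, sub_zero] at h1
        linarith [lt_of_le_of_lt h1 hfball]
      have hzbig : 1 - 2*ε ≤ ‖(lam • (T ^ n) f) t‖ := by
        have h1 : 1 - ε ≤ ‖h' t‖ := by
          have h2 := sc_dist_apply h' h t
          have h3 : ‖h t‖ = 1 := by rw [hhK t ht]; norm_num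
          have h4 : ‖h t‖ - ‖h' t - h t‖ ≤ ‖h' t‖ := by
            linarith [abs_le.mp (abs_norm_sub_norm_le (h' t) (h t))]
          linarith [lt_of_le_of_lt h2 hh'h]
        have h5 := sc_dist_apply (lam • (T ^ n) f) h' t
        have h6 : ‖h' t‖ - ‖(lam • (T ^ n) f) t - h' t‖ ≤ ‖(lam • (T ^ n) f) t‖ := by
          linarith [abs_le.mp (abs_norm_sub_norm_le ((lam • (T ^ n) f) t) (h' t))]
        linarith [lt_of_le_of_lt h5 hzε]
      have hProdpos : 0 < ∏ j ∈ range n, w ((⇑α)^[j] t) := prod_pos fun j _ => hw_pos _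
      have hstep : 1 - 2*ε ≤ L * ((∏ j ∈ range n, w ((⇑α)^[j] t)) * ε) := by
        calc 1 - 2*ε ≤ ‖(lam • (T ^ n) f) t‖ := hzbig
          _ = L * ((∏ j ∈ range n, w ((⇑α)^[j] t)) * ‖f ((⇑α)^[n] t)‖) := hzt
          _ ≤ L * ((∏ j ∈ range n, w ((⇑α)^[j] t)) * ε) := by
              apply mul_le_mul_of_nonneg_left _ hLpos.le
              exact mul_le_mul_of_nonneg_left hfαt hProdpos.le
      rw [prod_inv_distrib]
      have h2ε : (0:ℝ) < 1 - 2*ε := by linarith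
      rw [le_div_iff₀ h2ε]
      have hPinv : (∏ j ∈ range n, w ((⇑α)^[j] t))⁻¹ * (1 - 2*ε)
          ≤ (∏ j ∈ range n, w ((⇑α)^[j] t))⁻¹ * (L * ((∏ j ∈ range n, w ((⇑α)^[j] t)) * ε)) := by
        apply mul_le_mul_of_nonneg_left hstep (inv_nonneg.mpr hProdpos.le)
      calc (∏ j ∈ range n, w ((⇑α)^[j] t))⁻¹ * (1 - 2*ε)
          ≤ (∏ j ∈ range n, w ((⇑α)^[j] t))⁻¹ * (L * ((∏ j ∈ range n, w ((⇑α)^[j] t)) * ε)) :=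
            hPinv
        _ = L * ε := by
            field_simp
    -- combine
    refine ⟨n, hnM, ?_⟩
    have hAle : sSup ((fun t => ∏ j ∈ range n, w ((⇑α.symm)^[n - j] t)) '' K)
        ≤ 2*ε / ((1 - ε) * L) := by
      apply Real.sSup_le
      · rintro x ⟨t, ht, rfl⟩
        exact hcoreA t ht
      · exact div_nonneg (by linarith) (le_of_lt (mul_pos (by linarith) hLpos))
    have hBle : sSup ((fun t => ∏ j ∈ range n, (w ((⇑α)^[j] t))⁻¹) '' K)
        ≤ L * ε / (1 - 2*ε) := by
      apply Real.sSup_le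
      · rintro x ⟨t, ht, rfl⟩
        exact hcoreB t ht
      · exact div_nonneg (mul_nonneg hLpos.le hε.le) (by linarith)
    have hA0 : 0 ≤ sSup ((fun t => ∏ j ∈ range n, w ((⇑α.symm)^[n - j] t)) '' K) :=
      Real.sSup_nonneg fun x hx => by
        obtain ⟨t, ht, rfl⟩ := hx; exact (prod_pos fun j _ => hw_pos _).le
    have hB0' : 0 ≤ sSup ((fun t => ∏ j ∈ range n, (w ((⇑α)^[j] t))⁻¹) '' K) :=
      Real.sSup_nonneg fun x hx => by
        obtain ⟨t, ht, rfl⟩ := hx; exact (prod_pos fun j _ => inv_pos.mpr (hw_pos _)).le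
    have h2ε : (0:ℝ) < 1 - 2*ε := by linarith
    calc sSup ((fun t => ∏ j ∈ range n, w ((⇑α.symm)^[n - j] t)) '' K) *
        sSup ((fun t => ∏ j ∈ range n, (w ((⇑α)^[j] t))⁻¹) '' K)
        ≤ (2*ε / ((1 - ε) * L)) * (L * ε / (1 - 2*ε)) := by
          exact mul_le_mul hAle hBle hB0'
            (div_nonneg (by linarith) (le_of_lt (mul_pos (by linarith) hLpos)))
      _ = 2 * ε^2 / ((1 - ε) * (1 - 2*ε)) := by
          rw [div_mul_div_comm, show 2*ε * (L*ε) = L * (2*ε^2) by ring,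
            show (1 - ε) * L * (1 - 2*ε) = L * ((1-ε)*(1-2*ε)) by ring,
            mul_div_mul_left _ _ hLpos.ne']
      _ ≤ 8 * ε^2 := by
          rw [div_le_iff₀ (mul_pos (by linarith : (0:ℝ) < 1 - ε) h2ε)]
          nlinarith [sq_nonneg ε, hε.le]
      _ ≤ c := h8
  -- build the sequence
  choose F hF1 hF2 using hkey
  set seq : ℕ → ℕ := fun k => Nat.rec (F 0 1 one_pos)
    (fun k ih => F ih (1/((k:ℝ)+2)) (by positivity)) k with hseq
  have hseqsucc : ∀ k, seq (k+1) = F (seq k) (1/((k:ℝ)+2)) (by positivity) := fun k => rfl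
  have hmono : StrictMono seq := by
    apply strictMono_nat_of_lt_succ
    intro k
    rw [hseqsucc k]
    exact hF1 _ _ _
  have h1le : ∀ k, 1 ≤ seq k := by
    intro k
    induction k with
    | zero => exact hF1 0 1 one_pos
    | succ k ih => exact le_of_lt (lt_of_le_of_lt ih (hmono (Nat.lt_succ_self k)))
  refine ⟨seq, hmono, h1le, ?_⟩
  have hbound : ∀ k, sSup ((fun t => ∏ j ∈ range (seq k), w ((⇑α.symm)^[seq k - j] t)) '' K) *
      sSup ((fun t => ∏ j ∈ range (seq k), (w ((⇑α)^[j] t))⁻¹) '' K) ≤ 1/((k:ℝ)+1) := by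
    intro k
    cases k with
    | zero =>
      have := hF2 0 1 one_pos
      have h0 : seq 0 = F 0 1 one_pos := rfl
      rw [h0]
      simpa using this
    | succ k =>
      have := hF2 (seq k) (1/((k:ℝ)+2)) (by positivity)
      rw [hseqsucc k] at *
      convert this using 2 <;> push_cast <;> ring_nf
  apply squeeze_zero
  · intro k
    apply mul_nonneg
    · exact Real.sSup_nonneg fun x hx => by
        obtain ⟨t, ht, rfl⟩ := hx; exact (prod_pos fun j _ => hw_pos _).le
    · exact Real.sSup_nonneg fun x hx => by
        obtain ⟨t, ht, rfl⟩ := hx; exact (prod_pos fun j _ => inv_pos.mpr (hw_pos _)).le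
  · exact hbound
  · exact tendsto_one_div_add_atTop_nhds_zero_nat

end Aux

theorem supercyclic_iff_weight_condition_C0
    {Ω : Type*} [TopologicalSpace Ω] [LocallyCompactSpace Ω] [T2Space Ω]
    [NoncompactSpace Ω] [TopologicalSpace.SeparableSpace C₀(Ω, ℂ)]
    (α : Ω ≃ₜ Ω)
    (haper : ∀ K : Set Ω, IsCompact K →
      ∃ N : ℕ, 0 < N ∧ ∀ n ≥ N, ((⇑α)^[n] '' K) ∩ K = ∅)
    (w : Ω → ℝ) (hw_cont : Continuous w) (hw_pos : ∀ t, 0 < w t)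
    (hw_bdd : ∃ C, ∀ t, w t ≤ C) (hw_inv_bdd : ∃ C, ∀ t, (w t)⁻¹ ≤ C)
    (T S : C₀(Ω, ℂ) →L[ℂ] C₀(Ω, ℂ))
    (hT : ∀ (f : C₀(Ω, ℂ)) (t : Ω), T f t = (w t : ℂ) * f (α t))
    (hST : ∀ f, S (T f) = f) (hTS : ∀ f, T (S f) = f) :
    IsSupercyclic T ↔
      ∀ K : Set Ω, IsCompact K →
        ∃ n : ℕ → ℕ, StrictMono n ∧ (∀ k, 1 ≤ n k) ∧
          Tendsto (fun k =>
              sSup ((fun t => ∏ j ∈ range (n k), w ((⇑α.symm)^[n k - j] t)) '' K) *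
              sSup ((fun t => ∏ j ∈ range (n k), (w ((⇑α)^[j] t))⁻¹) '' K))
            atTop (nhds 0) := by
  constructor
  · intro hsc K hK
    exact sc_necessity α w T haper hw_cont hw_pos hT hsc K hK
  · intro hcond
    exact sc_sufficiency α w T S hw_cont hw_pos hT hTS hcond
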